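/- Let v : Fin 5 → ℙ(K^4) satisfy π(v)(I) = |I ∩ {0}| + min(|I \ {0}|, 2) for every I ⊆ Fin 5. Then there exist scalars p_0, p_1 ∈ K with p_0 p_1 (p_0 − p_1) ≠ 0 and a linear automorphism g of K^4 such that v_0 = g[e_2], v_1 = g[e_0], v_2 = g[e_1], v_3 = g[e_0 + e_1], and v_4 = g[p_0 e_0 + p_1 e_1]. -/

import Mathlib

open scoped LinearAlgebra.Projectivization

/-- The subspace of `Fin n → K` spanned by the lines `v i` for `i ∈ I`. -/
noncomputable def spanV {K : Type*} [Field K] {n m : ℕ}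
    (v : Fin m → ℙ K (Fin n → K)) (I : Finset (Fin m)) : Submodule K (Fin n → K) :=
  ⨆ i ∈ I, (v i).submodule

/-- The rank matrix of a tuple of points in projective space. -/
noncomputable def rankMatrix {K : Type*} [Field K] {n m : ℕ}
    (v : Fin m → ℙ K (Fin n → K)) (I : Finset (Fin m)) : ℕ :=
  Module.finrank K (spanV v I)

lemma ne_zero_of_apply_ne_zero {K : Type*} [Field K] {n : ℕ} {u : Fin n → K} {i : Fin n}
    (h : u i ≠ 0) : u ≠ 0 := fun h0 => h (by rw [h0]; rfl)

set_option maxHeartbeats 1000000 in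
/-- normal form for quintuples of rank type (5,5). -/
theorem rank_5_5_normal_form (K : Type*) [Field K] [IsAlgClosed K] [CharZero K]
    (v : Fin 5 → ℙ K (Fin 4 → K))
    (h : ∀ I : Finset (Fin 5), rankMatrix v I = (I ∩ {0}).card + min (I \ {0}).card 2) :
    ∃ p₀ p₁ : K, ∃ hp : p₀ * p₁ * (p₀ - p₁) ≠ 0,
      ∃ g : (Fin 4 → K) ≃ₗ[K] (Fin 4 → K),
        v 0 = Projectivization.mk K (g ![0,0,1,0])
            (g.map_ne_zero_iff.mpr (ne_zero_of_apply_ne_zero (i := 2) (by show (1 : K) ≠ 0; exact one_ne_zero))) ∧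
        v 1 = Projectivization.mk K (g ![1,0,0,0])
            (g.map_ne_zero_iff.mpr (ne_zero_of_apply_ne_zero (i := 0) (by norm_num))) ∧
        v 2 = Projectivization.mk K (g ![0,1,0,0])
            (g.map_ne_zero_iff.mpr (ne_zero_of_apply_ne_zero (i := 1) (by norm_num))) ∧
        v 3 = Projectivization.mk K (g ![1,1,0,0])
            (g.map_ne_zero_iff.mpr (ne_zero_of_apply_ne_zero (i := 0) (by norm_num))) ∧
        v 4 = Projectivization.mk K (g ![p₀,p₁,0,0])
            (g.map_ne_zero_iff.mpr (ne_zero_of_apply_ne_zero (i := 0) (by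
              simpa using left_ne_zero_of_mul (left_ne_zero_of_mul hp)))) := by
  classical
  set u : Fin 5 → (Fin 4 → K) := fun i => (v i).rep with hu
  have hne : ∀ i, u i ≠ 0 := fun i => (v i).rep_nonzero
  have hsub : ∀ i, (v i).submodule = K ∙ u i := fun i => (v i).submodule_eq
  have hrk : ∀ (I : Finset (Fin 5)) (S : Submodule K (Fin 4 → K)) (n : ℕ),
      spanV v I = S → (I ∩ {0}).card + min (I \ {0}).card 2 = n →
      Module.finrank K S = n := by
    intro I S n hS hn; rw [← hS, ← hn]; exact h I
  have h12 : Module.finrank K ((K ∙ u 1) ⊔ (K ∙ u 2) : Submodule K (Fin 4 → K)) = 2 :=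
    hrk {1,2} _ 2 (by simp [spanV, iSup_or, iSup_sup_eq, hsub]) (by decide)
  have h13 : Module.finrank K ((K ∙ u 1) ⊔ (K ∙ u 3) : Submodule K (Fin 4 → K)) = 2 :=
    hrk {1,3} _ 2 (by simp [spanV, iSup_or, iSup_sup_eq, hsub]) (by decide)
  have h23 : Module.finrank K ((K ∙ u 2) ⊔ (K ∙ u 3) : Submodule K (Fin 4 → K)) = 2 :=
    hrk {2,3} _ 2 (by simp [spanV, iSup_or, iSup_sup_eq, hsub]) (by decide)
  have h14 : Module.finrank K ((K ∙ u 1) ⊔ (K ∙ u 4) : Submodule K (Fin 4 → K)) = 2 :=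
    hrk {1,4} _ 2 (by simp [spanV, iSup_or, iSup_sup_eq, hsub]) (by decide)
  have h24 : Module.finrank K ((K ∙ u 2) ⊔ (K ∙ u 4) : Submodule K (Fin 4 → K)) = 2 :=
    hrk {2,4} _ 2 (by simp [spanV, iSup_or, iSup_sup_eq, hsub]) (by decide)
  have h34 : Module.finrank K ((K ∙ u 3) ⊔ (K ∙ u 4) : Submodule K (Fin 4 → K)) = 2 :=
    hrk {3,4} _ 2 (by simp [spanV, iSup_or, iSup_sup_eq, hsub]) (by decide)
  have h123 : Module.finrank K
      ((K ∙ u 1) ⊔ ((K ∙ u 2) ⊔ (K ∙ u 3)) : Submodule K (Fin 4 → K)) = 2 :=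
    hrk {1,2,3} _ 2 (by simp [spanV, iSup_or, iSup_sup_eq, hsub]) (by decide)
  have h124 : Module.finrank K
      ((K ∙ u 1) ⊔ ((K ∙ u 2) ⊔ (K ∙ u 4)) : Submodule K (Fin 4 → K)) = 2 :=
    hrk {1,2,4} _ 2 (by simp [spanV, iSup_or, iSup_sup_eq, hsub]) (by decide)
  have h012 : Module.finrank K
      ((K ∙ u 0) ⊔ ((K ∙ u 1) ⊔ (K ∙ u 2)) : Submodule K (Fin 4 → K)) = 3 :=
    hrk {0,1,2} _ 3 (by simp [spanV, iSup_or, iSup_sup_eq, hsub]) (by decide)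
  -- collapse lemma: if u i lies on the line of u j then the pair spans a line
  have coll : ∀ i j : Fin 5, u i ∈ (K ∙ u j) →
      Module.finrank K ((K ∙ u j) ⊔ (K ∙ u i) : Submodule K (Fin 4 → K)) = 1 := by
    intro i j hij
    rw [sup_eq_left.mpr ((Submodule.span_singleton_le_iff_mem _ _).mpr hij),
      finrank_span_singleton (hne j)]
  -- u 3 and u 4 lie in the plane spanned by u 1, u 2
  have memplane : ∀ k : Fin 5,
      Module.finrank K ((K ∙ u 1) ⊔ ((K ∙ u 2) ⊔ (K ∙ u k)) : Submodule K (Fin 4 → K)) = 2 →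
      ∃ a b : K, a • u 1 + b • u 2 = u k := by
    intro k hk
    have hle : ((K ∙ u 1) ⊔ (K ∙ u 2) : Submodule K (Fin 4 → K)) ≤
        (K ∙ u 1) ⊔ ((K ∙ u 2) ⊔ (K ∙ u k)) := sup_le_sup_left le_sup_left _
    have heq := Submodule.eq_of_le_of_finrank_le hle (by rw [h12, hk])
    have hmem : u k ∈ ((K ∙ u 1) ⊔ (K ∙ u 2) : Submodule K (Fin 4 → K)) := by
      rw [heq]
      exact Submodule.mem_sup_right
        (Submodule.mem_sup_right (Submodule.mem_span_singleton_self _))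
    rw [show ((K ∙ u 1) ⊔ (K ∙ u 2) : Submodule K (Fin 4 → K)) =
        Submodule.span K {u 1, u 2} from (Submodule.span_insert _ _).symm,
      Submodule.mem_span_pair] at hmem
    exact hmem
  obtain ⟨a, b, hab⟩ := memplane 3 h123
  obtain ⟨c, d, hcd⟩ := memplane 4 h124
  have ha : a ≠ 0 := by
    rintro rfl
    have : u 3 ∈ (K ∙ u 2) := by
      rw [← hab, zero_smul, zero_add]
      exact Submodule.smul_mem _ b (Submodule.mem_span_singleton_self _)
    rw [coll 3 2 this] at h23; omega
  have hb : b ≠ 0 := by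
    rintro rfl
    have : u 3 ∈ (K ∙ u 1) := by
      rw [← hab, zero_smul, add_zero]
      exact Submodule.smul_mem _ a (Submodule.mem_span_singleton_self _)
    rw [coll 3 1 this] at h13; omega
  have hc : c ≠ 0 := by
    rintro rfl
    have : u 4 ∈ (K ∙ u 2) := by
      rw [← hcd, zero_smul, zero_add]
      exact Submodule.smul_mem _ d (Submodule.mem_span_singleton_self _)
    rw [coll 4 2 this] at h24; omega
  have hd : d ≠ 0 := by
    rintro rfl
    have : u 4 ∈ (K ∙ u 1) := by
      rw [← hcd, zero_smul, add_zero]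
      exact Submodule.smul_mem _ c (Submodule.mem_span_singleton_self _)
    rw [coll 4 1 this] at h14; omega
  set f0 : Fin 4 → K := a • u 1 with hf0
  set f1 : Fin 4 → K := b • u 2 with hf1
  have hu3 : f0 + f1 = u 3 := hab
  have hu4 : (c / a) • f0 + (d / b) • f1 = u 4 := by
    rw [hf0, hf1, smul_smul, smul_smul, div_mul_cancel₀ c ha, div_mul_cancel₀ d hb]
    exact hcd
  have hpq : c / a ≠ d / b := by
    intro heq
    have : u 4 ∈ (K ∙ u 3) := by
      rw [← hu4, heq, ← smul_add, hu3]
      exact Submodule.smul_mem _ _ (Submodule.mem_span_singleton_self _)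
    rw [coll 4 3 this] at h34; omega
  have sf0 : (K ∙ f0) = K ∙ u 1 := Submodule.span_singleton_smul_eq (isUnit_iff_ne_zero.mpr ha) _
  have sf1 : (K ∙ f1) = K ∙ u 2 := Submodule.span_singleton_smul_eq (isUnit_iff_ne_zero.mpr hb) _
  have hf0ne : f0 ≠ 0 := smul_ne_zero ha (hne 1)
  have hne0 : u 0 ∉ ((K ∙ u 1) ⊔ (K ∙ u 2) : Submodule K (Fin 4 → K)) := by
    intro hmem
    rw [sup_eq_right.mpr ((Submodule.span_singleton_le_iff_mem _ _).mpr hmem), h12] at h012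
    omega
  -- pick a vector outside the span of f0, f1, u 0
  have hS3 : ((K ∙ f0) ⊔ (K ∙ f1) ⊔ (K ∙ u 0) : Submodule K (Fin 4 → K)) ≠ ⊤ := by
    intro htop
    have hle : Module.finrank K ((K ∙ f0) ⊔ (K ∙ f1) ⊔ (K ∙ u 0) : Submodule K (Fin 4 → K)) ≤ 3 := by
      refine (Submodule.finrank_add_le_finrank_add_finrank _ _).trans ?_
      have h1 := Submodule.finrank_add_le_finrank_add_finrank (K ∙ f0) (K ∙ f1)
      have e0 : Module.finrank K (K ∙ f0 : Submodule K (Fin 4 → K)) ≤ 1 :=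
        finrank_span_le_card _ |>.trans (by simp)
      have e1 : Module.finrank K (K ∙ f1 : Submodule K (Fin 4 → K)) ≤ 1 :=
        finrank_span_le_card _ |>.trans (by simp)
      have e2 : Module.finrank K (K ∙ u 0 : Submodule K (Fin 4 → K)) ≤ 1 :=
        finrank_span_le_card _ |>.trans (by simp)
      omega
    rw [htop, finrank_top] at hle
    simp [Module.finrank_fin_fun] at hle
  obtain ⟨w, -, hw⟩ := SetLike.exists_of_lt (show ((K ∙ f0) ⊔ (K ∙ f1) ⊔ (K ∙ u 0) : Submodule K (Fin 4 → K)) < ⊤ from lt_top_iff_ne_top.mpr hS3)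
  have li4 : LinearIndependent K ![f0, f1, u 0, w] := by
    rw [show ![f0, f1, u 0, w] = Fin.snoc ![f0, f1, u 0] w from by
      funext i; fin_cases i <;> rfl, linearIndependent_fin_snoc]
    constructor
    · rw [show ![f0, f1, u 0] = Fin.snoc ![f0, f1] (u 0) from by
        funext i; fin_cases i <;> rfl, linearIndependent_fin_snoc]
      constructor
      · rw [show ![f0, f1] = Fin.snoc ![f0] f1 from by
          funext i; fin_cases i <;> rfl, linearIndependent_fin_snoc]
        constructor
        · exact linearIndependent_unique_iff.mpr hf0ne
        · rw [show Set.range ![f0] = {f0} from by simp,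
            show Submodule.span K {f0} = K ∙ f0 from rfl, sf0]
          intro hmem
          have : u 2 ∈ (K ∙ u 1) := by
            rw [hf1] at hmem
            have := Submodule.smul_mem (K ∙ u 1) b⁻¹ hmem
            rwa [smul_smul, inv_mul_cancel₀ hb, one_smul] at this
          rw [coll 2 1 this] at h12; omega
      · rw [show Set.range ![f0, f1] = {f0, f1} from by ext x; simp; tauto,
          show Submodule.span K {f0, f1} = (K ∙ f0) ⊔ (K ∙ f1) from Submodule.span_insert _ _,
          sf0, sf1]
        exact hne0
    · rw [show Set.range ![f0, f1, u 0] = {f0, f1, u 0} from by ext x; simp; tauto,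
        show Submodule.span K {f0, f1, u 0} = (K ∙ f0) ⊔ (K ∙ f1) ⊔ (K ∙ u 0) from by
          rw [Submodule.span_insert, Submodule.span_insert, sup_assoc]]
      exact hw
  have cardeq : Fintype.card (Fin 4) = Module.finrank K (Fin 4 → K) := by
    simp [Module.finrank_fin_fun]
  set B := basisOfLinearIndependentOfCardEqFinrank li4 cardeq with hB
  have hBc : ⇑B = ![f0, f1, u 0, w] := coe_basisOfLinearIndependentOfCardEqFinrank li4 cardeq
  set g : (Fin 4 → K) ≃ₗ[K] (Fin 4 → K) := (Pi.basisFun K (Fin 4)).equiv B (Equiv.refl _) with hg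
  have hgb : ∀ i : Fin 4, g (Pi.basisFun K (Fin 4) i) = ![f0, f1, u 0, w] i := by
    intro i
    rw [hg, Module.Basis.equiv_apply, hBc]; rfl
  have g0 : g ![0,0,1,0] = u 0 := by
    rw [show (![0,0,1,0] : Fin 4 → K) = Pi.basisFun K (Fin 4) 2 from by
      funext i; fin_cases i <;> simp]
    exact hgb 2
  have g1 : g ![1,0,0,0] = f0 := by
    rw [show (![1,0,0,0] : Fin 4 → K) = Pi.basisFun K (Fin 4) 0 from by
      funext i; fin_cases i <;> simp]
    exact hgb 0
  have g2 : g ![0,1,0,0] = f1 := by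
    rw [show (![0,1,0,0] : Fin 4 → K) = Pi.basisFun K (Fin 4) 1 from by
      funext i; fin_cases i <;> simp]
    exact hgb 1
  have g3 : g ![1,1,0,0] = u 3 := by
    rw [show (![1,1,0,0] : Fin 4 → K) = ![1,0,0,0] + ![0,1,0,0] from by
      funext i; fin_cases i <;> simp, map_add, g1, g2, hu3]
  have g4 : g ![c/a, d/b, 0, 0] = u 4 := by
    rw [show (![c/a, d/b, 0, 0] : Fin 4 → K) = (c/a) • ![1,0,0,0] + (d/b) • ![0,1,0,0] from by
      funext i; fin_cases i <;> simp, map_add, map_smul, map_smul, g1, g2, hu4]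
  refine ⟨c / a, d / b,
    mul_ne_zero (mul_ne_zero (div_ne_zero hc ha) (div_ne_zero hd hb)) (sub_ne_zero.mpr hpq),
    g, ?_, ?_, ?_, ?_, ?_⟩
  · conv_lhs => rw [← (v 0).mk_rep]
    rw [Projectivization.mk_eq_mk_iff']
    exact ⟨1, by rw [g0, one_smul]⟩
  · conv_lhs => rw [← (v 1).mk_rep]
    rw [Projectivization.mk_eq_mk_iff']
    exact ⟨a⁻¹, by rw [g1, hf0, smul_smul, inv_mul_cancel₀ ha, one_smul]⟩
  · conv_lhs => rw [← (v 2).mk_rep]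
    rw [Projectivization.mk_eq_mk_iff']
    exact ⟨b⁻¹, by rw [g2, hf1, smul_smul, inv_mul_cancel₀ hb, one_smul]⟩
  · conv_lhs => rw [← (v 3).mk_rep]
    rw [Projectivization.mk_eq_mk_iff']
    exact ⟨1, by rw [g3, one_smul]⟩
  · conv_lhs => rw [← (v 4).mk_rep]
    rw [Projectivization.mk_eq_mk_iff']
    exact ⟨1, by rw [g4, one_smul]⟩
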